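/- If a sequence (a_n) in [0,1] satisfies a_{n+1} ≥ 1 - (1 - a_n^5)^2 for all n, and a_n → 1 as n → ∞, then there exist constants C > 0 and 0 < α < 1 such that a_n ≥ 1 - C·α^{2^n} for all sufficiently large n. -/
import Mathlib


open Filter

/-- If (a_n) ⊆ [0,1] satisfies a_{n+1} ≥ 1 - (1 - a_n^5)^2 for all n and a_n → 1,
then there are C > 0 and α ∈ (0,1) with a_n ≥ 1 - C·α^(2^n) for all large n. -/
theorem stmt_2 (a : ℕ → ℝ) (ha : ∀ n, a n ∈ Set.Icc (0 : ℝ) 1)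
    (hrec : ∀ n, 1 - (1 - a n ^ 5) ^ 2 ≤ a (n + 1))
    (hlim : Tendsto a atTop (nhds 1)) :
    ∃ C > (0 : ℝ), ∃ α : ℝ, 0 < α ∧ α < 1 ∧
      ∃ N : ℕ, ∀ n, N ≤ n → 1 - C * α ^ 2 ^ n ≤ a n := by
  obtain ⟨N, hN⟩ : ∃ N, ∀ n ≥ N, 1 - 1/50 ≤ a n := by
    have h := hlim.eventually (eventually_ge_nhds (show (1:ℝ) - 1/50 < 1 by norm_num))
    exact eventually_atTop.1 h
  set α : ℝ := (1/2 : ℝ) ^ (((2:ℝ) ^ N)⁻¹) with hα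
  have h2pos : (0:ℝ) < (2:ℝ) ^ N := by positivity
  have hα0 : 0 < α := Real.rpow_pos_of_pos (by norm_num) _
  have hα1 : α < 1 := Real.rpow_lt_one (by norm_num) (by norm_num) (by positivity)
  have hαN : α ^ (2 ^ N : ℕ) = 1/2 := by
    rw [hα, ← Real.rpow_natCast (((1:ℝ)/2) ^ (((2:ℝ) ^ N)⁻¹)) (2 ^ N),
      ← Real.rpow_mul (by norm_num)]
    push_cast
    rw [inv_mul_cancel₀ (ne_of_gt h2pos), Real.rpow_one]
  have key : ∀ n, N ≤ n → 25 * (1 - a n) ≤ α ^ 2 ^ n := by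
    intro n hn
    induction n, hn using Nat.le_induction with
    | base =>
        rw [hαN]
        have := hN N le_rfl
        linarith
    | succ n hn ih =>
        have hb0 : 0 ≤ 1 - a n := by have := (ha n).2; linarith
        have h5 : 1 - a n ^ 5 ≤ 5 * (1 - a n) := by
          have h0 := (ha n).1; have h1 := (ha n).2
          have h2 : a n ^ 2 ≤ 1 := pow_le_one₀ h0 h1
          have h3 : a n ^ 3 ≤ 1 := pow_le_one₀ h0 h1
          have h4 : a n ^ 4 ≤ 1 := pow_le_one₀ h0 h1
          nlinarith [mul_nonneg (show (0:ℝ) ≤ 1 - a n by linarith)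
            (show (0:ℝ) ≤ 4 - a n - a n^2 - a n^3 - a n^4 by linarith)]
        have h5' : 0 ≤ 1 - a n ^ 5 := by
          have h0 := (ha n).1; have h1 := (ha n).2
          nlinarith [pow_le_one₀ h0 h1 (n := 5)]
        have hr := hrec n
        have hsq : 25 * (1 - a (n+1)) ≤ (25 * (1 - a n))^2 := by nlinarith
        have hpow : α ^ 2 ^ (n+1) = (α ^ 2 ^ n)^2 := by
          rw [← pow_mul, pow_succ]
        rw [hpow]
        calc 25 * (1 - a (n+1)) ≤ (25 * (1 - a n))^2 := hsq
          _ ≤ (α ^ 2 ^ n)^2 := by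
              have h25 : 0 ≤ 25 * (1 - a n) := by linarith
              exact pow_le_pow_left₀ h25 ih 2
  refine ⟨1, one_pos, α, hα0, hα1, N, fun n hn => ?_⟩
  have := key n hn
  have hb0 : 0 ≤ 1 - a n := by have := (ha n).2; linarith
  nlinarith
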